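/- Reeb stability: for continuous f₁, f₂ : X → ℝ, the interleaving distance between the Reeb precosheaves of the Reeb graphs Rb(X,f₁) and Rb(X,f₂) is at most ‖f₁ − f₂‖_∞. -/

import Mathlib

open CategoryTheory Set
open scoped NNReal ENNReal

/-- The Reeb relation of `f : X → ℝ`: `x ∼_f y` iff `y` lies in the connected
component of `x` inside the level set `f ⁻¹' {f x}`. -/
def ReebRel {X : Type*} [TopologicalSpace X] (f : X → ℝ) (x y : X) : Prop :=
  y ∈ connectedComponentIn (f ⁻¹' {f x}) x

theorem ReebRel.apply_eq {X : Type*} [TopologicalSpace X] {f : X → ℝ} {x y : X}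
    (h : ReebRel f x y) : f x = f y :=
  (show f y = f x from connectedComponentIn_subset (f ⁻¹' {f x}) x h).symm

/-- The function induced by `f` on the Reeb quotient. -/
def reebTilde {X : Type*} [TopologicalSpace X] (f : X → ℝ) : Quot (ReebRel f) → ℝ :=
  Quot.lift f fun _ _ h => h.apply_eq

/-- The poset of nonempty open intervals `(a, b)` of `ℝ`, ordered by inclusion. -/
def RInt : Type := {p : ℝ × ℝ // p.1 < p.2}

namespace RInt

instance : Preorder RInt where
  le I J := J.1.1 ≤ I.1.1 ∧ I.1.2 ≤ J.1.2
  le_refl I := ⟨le_refl _, le_refl _⟩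
  le_trans I J K h h' := ⟨h'.1.trans h.1, h.2.trans h'.2⟩

/-- The underlying open interval `(a, b) ⊆ ℝ`. -/
def set (I : RInt) : Set ℝ := Set.Ioo I.1.1 I.1.2

theorem set_mono {I J : RInt} (h : I ≤ J) : I.set ⊆ J.set :=
  Set.Ioo_subset_Ioo h.1 h.2

/-- The `δ`-thickening `(a - δ, b + δ)` of the open interval `(a, b)`. -/
def widen (δ : ℝ≥0) (I : RInt) : RInt :=
  ⟨(I.1.1 - δ, I.1.2 + δ), by
    have h := I.2
    have h0 : (0 : ℝ) ≤ δ := δ.2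
    dsimp only
    linarith⟩

theorem widen_mono (δ : ℝ≥0) : Monotone (widen δ) := by
  intro I J h
  exact ⟨by dsimp [widen]; linarith [h.1], by dsimp [widen]; linarith [h.2]⟩

theorem le_widen (δ : ℝ≥0) (I : RInt) : I ≤ widen δ I := by
  have h0 : (0 : ℝ) ≤ δ := δ.2
  exact ⟨by dsimp [widen]; linarith, by dsimp [widen]; linarith⟩

end RInt

/-- The widening functor `ω_δ` sending `(a, b)` to `(a - δ, b + δ)`. -/
def widenFunctor (δ : ℝ≥0) : RInt ⥤ RInt := (RInt.widen_mono δ).functor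

/-- Two functors `C, D : Int ⥤ 𝒜` are `δ`-interleaved if there are natural
transformations `Φ : C ⟶ D ∘ ω_δ` and `Ψ : D ⟶ C ∘ ω_δ` whose composites are
the maps induced by the inclusions `I ⊆ ω_δ (ω_δ I) = ω_{2δ} I`. -/
def IsInterleaving {A : Type*} [Category A] (δ : ℝ≥0) (C D : RInt ⥤ A) : Prop :=
  ∃ (Φ : C ⟶ widenFunctor δ ⋙ D) (Ψ : D ⟶ widenFunctor δ ⋙ C),
    (∀ I : RInt, Φ.app I ≫ Ψ.app ((widenFunctor δ).obj I) =
      C.map (homOfLE ((RInt.le_widen δ I).trans (RInt.le_widen δ (RInt.widen δ I))))) ∧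
    (∀ I : RInt, Ψ.app I ≫ Φ.app ((widenFunctor δ).obj I) =
      D.map (homOfLE ((RInt.le_widen δ I).trans (RInt.le_widen δ (RInt.widen δ I)))))

/-- The interleaving distance between two functors on the poset of open intervals. -/
noncomputable def interleavingDist {A : Type*} [Category A] (C D : RInt ⥤ A) : ℝ≥0∞ :=
  ⨅ (δ : ℝ≥0) (_ : IsInterleaving δ C D), (δ : ℝ≥0∞)

/-- The Reeb precosheaf `𝒟(X, f)`, sending an open interval `I` to the set of
connected components of `f ⁻¹' I`, with maps induced by inclusions. -/
def reebPrecosheaf {X : Type u} [TopologicalSpace X] (f : X → ℝ) : RInt ⥤ Type u where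
  obj I := ConnectedComponents ↥(f ⁻¹' I.set)
  map {I J} h :=
    TypeCat.ofHom
      (continuous_inclusion (Set.preimage_mono (RInt.set_mono h.le))).connectedComponentsMap
  map_id I := by
    ext c
    obtain ⟨x, rfl⟩ := ConnectedComponents.surjective_coe c
    rfl
  map_comp {I J K} h h' := by
    ext c
    obtain ⟨x, rfl⟩ := ConnectedComponents.surjective_coe c
    rfl


section ReebStability

variable {X : Type*} [TopologicalSpace X]

theorem reebRel_equivalence (f : X → ℝ) : Equivalence (ReebRel f) where
  refl x := mem_connectedComponentIn rfl
  symm {x y} h := by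
    have hxy : f x = f y := h.apply_eq
    unfold ReebRel at *
    rw [← hxy, ← connectedComponentIn_eq h]
    exact mem_connectedComponentIn rfl
  trans {x y z} h1 h2 := by
    have hxy : f x = f y := h1.apply_eq
    unfold ReebRel at *
    rw [← hxy] at h2
    rwa [← connectedComponentIn_eq h1] at h2

theorem mk_eq_of_quot_eq {f : X → ℝ} {S : Set ℝ} {x y : X} (hx : x ∈ f ⁻¹' S)
    (hy : y ∈ f ⁻¹' S) (h : Quot.mk (ReebRel f) x = Quot.mk (ReebRel f) y) :
    (ConnectedComponents.mk ⟨x, hx⟩ : ConnectedComponents ↥(f ⁻¹' S)) =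
      ConnectedComponents.mk ⟨y, hy⟩ := by
  have hr : ReebRel f x y := ((reebRel_equivalence f).eqvGen_iff).mp (Quot.eqvGen_exact h)
  have hsub1 : connectedComponentIn (f ⁻¹' {f x}) x ⊆ f ⁻¹' S := by
    intro z hz
    have hz' : f z = f x := connectedComponentIn_subset (f ⁻¹' {f x}) x hz
    simpa [Set.mem_preimage, hz'] using hx
  have hmem : y ∈ connectedComponentIn (f ⁻¹' S) x :=
    isPreconnected_connectedComponentIn.subset_connectedComponentIn
      (mem_connectedComponentIn (show x ∈ f ⁻¹' {f x} from rfl)) hsub1 hr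
  rw [connectedComponentIn_eq_image hx] at hmem
  obtain ⟨z, hz, hzy⟩ := hmem
  rw [show z = ⟨y, hy⟩ from Subtype.ext hzy] at hz
  exact ConnectedComponents.coe_eq_coe.mpr (connectedComponent_eq hz)

theorem reeb_lift_mem {f : X → ℝ} {S : Set ℝ} {q : Quot (ReebRel f)}
    (hq : q ∈ reebTilde f ⁻¹' S) {x : X} (hx : Quot.mk (ReebRel f) x = q) : x ∈ f ⁻¹' S := by
  have hfx : f x = reebTilde f q := by rw [← hx]; rfl
  simpa [Set.mem_preimage, hfx] using hq

/-- The restriction of the Reeb quotient map to the preimage of `S`. -/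
def piRes (f : X → ℝ) (S : Set ℝ) (z : ↥(f ⁻¹' S)) : ↥(reebTilde f ⁻¹' S) :=
  ⟨Quot.mk (ReebRel f) z.1, z.2⟩

theorem continuous_piRes (f : X → ℝ) (S : Set ℝ) : Continuous (piRes f S) :=
  Continuous.subtype_mk (continuous_quot_mk.comp continuous_subtype_val) _

theorem continuous_reebTilde {f : X → ℝ} (hf : Continuous f) : Continuous (reebTilde f) :=
  isQuotientMap_quot_mk.continuous_iff.mpr hf

theorem isQuotientMap_piRes {f : X → ℝ} (hf : Continuous f) {S : Set ℝ} (hS : IsOpen S) :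
    Topology.IsQuotientMap (piRes f S) :=
  isQuotientMap_quot_mk.restrictPreimage_isOpen (hS.preimage (continuous_reebTilde hf))

/-- A choice-based section on connected components. -/
noncomputable def qbar (f : X → ℝ) (S : Set ℝ) (w : ↥(reebTilde f ⁻¹' S)) :
    ConnectedComponents ↥(f ⁻¹' S) :=
  ConnectedComponents.mk ⟨(Quot.exists_rep w.1).choose,
    reeb_lift_mem w.2 (Quot.exists_rep w.1).choose_spec⟩

theorem qbar_eq {f : X → ℝ} {S : Set ℝ} (w : ↥(reebTilde f ⁻¹' S)) {x : X}
    (hx : x ∈ f ⁻¹' S) (hxe : Quot.mk (ReebRel f) x = w.1) :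
    qbar f S w = ConnectedComponents.mk ⟨x, hx⟩ :=
  mk_eq_of_quot_eq _ hx ((Quot.exists_rep w.1).choose_spec.trans hxe.symm)

theorem continuous_qbar {f : X → ℝ} (hf : Continuous f) {S : Set ℝ} (hS : IsOpen S) :
    Continuous (qbar f S) := by
  rw [(isQuotientMap_piRes hf hS).continuous_iff]
  have h : qbar f S ∘ piRes f S = ConnectedComponents.mk := by
    funext z
    exact qbar_eq _ z.2 rfl
  rw [h]
  exact ConnectedComponents.continuous_coe

/-- The map on Reeb connected components across a containment of preimages. -/
noncomputable def crossApp {f g : X → ℝ} (hf : Continuous f) {S T : Set ℝ} (hS : IsOpen S)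
    (hsub : f ⁻¹' S ⊆ g ⁻¹' T) (c : ConnectedComponents ↥(reebTilde f ⁻¹' S)) :
    ConnectedComponents ↥(reebTilde g ⁻¹' T) :=
  ((continuous_piRes g T).comp (continuous_inclusion hsub)).connectedComponentsMap
    ((continuous_qbar hf hS).connectedComponentsLift c)

theorem crossApp_mk {f g : X → ℝ} (hf : Continuous f) {S T : Set ℝ} (hS : IsOpen S)
    (hsub : f ⁻¹' S ⊆ g ⁻¹' T) (w : ↥(reebTilde f ⁻¹' S)) {x : X}
    (hx : x ∈ f ⁻¹' S) (hxe : Quot.mk (ReebRel f) x = w.1) :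
    crossApp hf hS hsub (ConnectedComponents.mk w) =
      ConnectedComponents.mk ⟨Quot.mk (ReebRel g) x, hsub hx⟩ := by
  unfold crossApp
  rw [show (continuous_qbar hf hS).connectedComponentsLift (ConnectedComponents.mk w)
      = qbar f S w from rfl, qbar_eq w hx hxe]
  rfl

theorem preimage_subset_widen {f g : X → ℝ} {δ : ℝ≥0} (hd : ∀ x, |f x - g x| ≤ (δ : ℝ))
    (I : RInt) : f ⁻¹' I.set ⊆ g ⁻¹' (RInt.widen δ I).set := by
  intro x hx
  simp only [Set.mem_preimage, RInt.set, RInt.widen, Set.mem_Ioo] at hx ⊢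
  have h := abs_le.mp (hd x)
  exact ⟨by linarith [hx.1, h.2], by linarith [hx.2, h.1]⟩

/-- One half of the interleaving between Reeb precosheaves. -/
noncomputable def reebInterleave {f g : X → ℝ} (hf : Continuous f) (δ : ℝ≥0)
    (hd : ∀ x, |f x - g x| ≤ (δ : ℝ)) :
    reebPrecosheaf (reebTilde f) ⟶ widenFunctor δ ⋙ reebPrecosheaf (reebTilde g) where
  app I := TypeCat.ofHom <| crossApp hf isOpen_Ioo (preimage_subset_widen hd I)
  naturality I J h := by
    ext c
    obtain ⟨w, rfl⟩ := ConnectedComponents.surjective_coe c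
    obtain ⟨x, hxe⟩ := Quot.exists_rep w.1
    have hx : x ∈ f ⁻¹' I.set := reeb_lift_mem w.2 hxe
    have hxJ : x ∈ f ⁻¹' J.set := Set.preimage_mono (RInt.set_mono h.le) hx
    show crossApp hf isOpen_Ioo (preimage_subset_widen hd J)
        ((reebPrecosheaf (reebTilde f)).map h (ConnectedComponents.mk w)) = _
    erw [show (reebPrecosheaf (reebTilde f)).map h (ConnectedComponents.mk w)
        = (ConnectedComponents.mk ⟨w.1, Set.preimage_mono (RInt.set_mono h.le) w.2⟩ :
            ConnectedComponents ↥(reebTilde f ⁻¹' J.set)) from rfl,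
      crossApp_mk hf isOpen_Ioo (preimage_subset_widen hd J) _ hxJ hxe]
    show _ = (widenFunctor δ ⋙ reebPrecosheaf (reebTilde g)).map h
        (crossApp hf isOpen_Ioo (preimage_subset_widen hd I) (ConnectedComponents.mk w))
    erw [crossApp_mk hf isOpen_Ioo (preimage_subset_widen hd I) w hx hxe]
    rfl

theorem reebInterleave_comp {f g : X → ℝ} (hf : Continuous f) (hg : Continuous g) (δ : ℝ≥0)
    (hd : ∀ x, |f x - g x| ≤ (δ : ℝ)) (hd' : ∀ x, |g x - f x| ≤ (δ : ℝ)) (I : RInt) :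
    (reebInterleave hf δ hd).app I ≫ (reebInterleave hg δ hd').app ((widenFunctor δ).obj I) =
      (reebPrecosheaf (reebTilde f)).map
        (homOfLE ((RInt.le_widen δ I).trans (RInt.le_widen δ (RInt.widen δ I)))) := by
  ext c
  obtain ⟨w, rfl⟩ := ConnectedComponents.surjective_coe c
  obtain ⟨x, hxe⟩ := Quot.exists_rep w.1
  have hx : x ∈ f ⁻¹' I.set := reeb_lift_mem w.2 hxe
  have hx2 : x ∈ g ⁻¹' (RInt.widen δ I).set := preimage_subset_widen hd I hx
  show (reebInterleave hg δ hd').app ((widenFunctor δ).obj I)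
      ((reebInterleave hf δ hd).app I (ConnectedComponents.mk w)) = _
  rw [show (reebInterleave hf δ hd).app I (ConnectedComponents.mk w)
      = ConnectedComponents.mk ⟨Quot.mk (ReebRel g) x, hx2⟩ from
      crossApp_mk hf isOpen_Ioo (preimage_subset_widen hd I) w hx hxe,
    show (reebInterleave hg δ hd').app ((widenFunctor δ).obj I)
        (ConnectedComponents.mk ⟨Quot.mk (ReebRel g) x, hx2⟩)
      = ConnectedComponents.mk ⟨Quot.mk (ReebRel f) x,
          preimage_subset_widen hd' (RInt.widen δ I) hx2⟩ from
      crossApp_mk hg isOpen_Ioo (preimage_subset_widen hd' (RInt.widen δ I)) _ hx2 rfl]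
  exact congrArg ConnectedComponents.mk (Subtype.ext hxe)

end ReebStability

theorem stmt13 {X : Type u} [TopologicalSpace X]
    (f₁ f₂ : X → ℝ) (hf₁ : Continuous f₁) (hf₂ : Continuous f₂) :
    interleavingDist (reebPrecosheaf (reebTilde f₁)) (reebPrecosheaf (reebTilde f₂)) ≤
      ⨆ x : X, ENNReal.ofReal |f₁ x - f₂ x| := by
  set S := ⨆ x : X, ENNReal.ofReal |f₁ x - f₂ x| with hSdef
  rcases eq_top_or_lt_top S with htop | hlt
  · rw [htop]; exact le_top
  · set δ : ℝ≥0 := S.toNNReal with hδdef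
    have hδS : (δ : ℝ≥0∞) = S := ENNReal.coe_toNNReal hlt.ne
    have hd : ∀ x, |f₁ x - f₂ x| ≤ (δ : ℝ) := by
      intro x
      have hx : ENNReal.ofReal |f₁ x - f₂ x| ≤ (δ : ℝ≥0∞) := by
        rw [hδS]
        exact le_iSup (fun x => ENNReal.ofReal |f₁ x - f₂ x|) x
      rw [← ENNReal.ofReal_coe_nnreal] at hx
      exact (ENNReal.ofReal_le_ofReal_iff δ.coe_nonneg).mp hx
    have hd' : ∀ x, |f₂ x - f₁ x| ≤ (δ : ℝ) := fun x => by
      rw [abs_sub_comm]; exact hd x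
    have hint : IsInterleaving δ (reebPrecosheaf (reebTilde f₁))
        (reebPrecosheaf (reebTilde f₂)) :=
      ⟨reebInterleave hf₁ δ hd, reebInterleave hf₂ δ hd',
        fun I => reebInterleave_comp hf₁ hf₂ δ hd hd' I,
        fun I => reebInterleave_comp hf₂ hf₁ δ hd' hd I⟩
    calc interleavingDist (reebPrecosheaf (reebTilde f₁)) (reebPrecosheaf (reebTilde f₂))
        ≤ (δ : ℝ≥0∞) := iInf₂_le δ hint
      _ = S := hδS
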